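/- Suppose q is even and there exists an MDS [n, n−3] code over GF(q) with n ≥ 4. Then n ≤ q + 2; moreover if q is odd then n ≤ q + 1. -/

import Mathlib

open Module Submodule LinearAlgebra.Projectivization

private noncomputable def projEquiv (F V : Type*) [Field F] [AddCommGroup V] [Module F V] :
    (ℙ F V) × Fˣ ≃ {v : V // v ≠ 0} where
  toFun p := ⟨(p.2 : F) • p.1.rep, smul_ne_zero (Units.ne_zero p.2) p.1.rep_nonzero⟩
  invFun v := (Projectivization.mk' F v,
    (Classical.choose (Projectivization.exists_smul_eq_mk_rep F v.1 v.2))⁻¹)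
  left_inv := by
    rintro ⟨p, a⟩
    have hw : (a : F) • p.rep ≠ 0 := smul_ne_zero (Units.ne_zero a) p.rep_nonzero
    have h1 : Projectivization.mk F ((a : F) • p.rep) hw = p := by
      conv_rhs => rw [← p.mk_rep]
      rw [Projectivization.mk_eq_mk_iff]
      exact ⟨a, rfl⟩
    have h2 := Classical.choose_spec
      (Projectivization.exists_smul_eq_mk_rep F ((a : F) • p.rep) hw)
    rw [Units.smul_def] at h2
    set b := Classical.choose
      (Projectivization.exists_smul_eq_mk_rep F ((a : F) • p.rep) hw) with hb
    rw [h1] at h2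
    have hq : ((b * a : Fˣ) : F) • p.rep = (1 : F) • p.rep := by
      rw [one_smul, Units.val_mul, mul_smul]; exact h2
    have hba : (b * a : Fˣ) = 1 := by
      have := smul_left_injective F p.rep_nonzero hq
      exact Units.ext (by simpa using this)
    refine Prod.ext ?_ ?_
    · simpa only [Projectivization.mk'_eq_mk] using h1
    · show b⁻¹ = a
      rw [← mul_one b⁻¹, ← hba, ← mul_assoc, inv_mul_cancel, one_mul]
  right_inv := by
    rintro ⟨w, hw⟩
    have h2 := Classical.choose_spec (Projectivization.exists_smul_eq_mk_rep F w hw)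
    rw [Units.smul_def] at h2
    set b := Classical.choose (Projectivization.exists_smul_eq_mk_rep F w hw) with hb
    ext
    simp only [Projectivization.mk'_eq_mk]
    calc ((b⁻¹ : Fˣ) : F) • (Projectivization.mk F w hw).rep
        = ((b⁻¹ : Fˣ) : F) • ((b : F) • w) := by rw [h2]
      _ = w := by rw [smul_smul, ← Units.val_mul, inv_mul_cancel, Units.val_one, one_smul]

private lemma proj_card_mul (F V : Type*) [Field F] [Fintype F] [AddCommGroup V] [Module F V]
    [FiniteDimensional F V] :
    Nat.card (ℙ F V) * (Fintype.card F - 1) = Fintype.card F ^ (finrank F V) - 1 := by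
  classical
  have : Finite V := Module.finite_of_finite F
  letI : Fintype V := Fintype.ofFinite V
  have h2 : Nat.card {v : V // v ≠ 0} = Fintype.card V - 1 := by
    have h3 := Fintype.card_subtype_compl (α := V) (fun v => v = 0)
    rw [Fintype.card_subtype_eq] at h3
    rw [Nat.card_eq_fintype_card]
    exact h3
  calc Nat.card (ℙ F V) * (Fintype.card F - 1)
      = Nat.card (ℙ F V) * Nat.card Fˣ := by
        rw [Nat.card_units, Nat.card_eq_fintype_card (α := F)]
    _ = Nat.card ((ℙ F V) × Fˣ) := (Nat.card_prod _ _).symm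
    _ = Nat.card {v : V // v ≠ 0} := Nat.card_congr (projEquiv F V)
    _ = Fintype.card V - 1 := h2
    _ = Fintype.card F ^ finrank F V - 1 := by rw [card_eq_pow_finrank (K := F)]

private lemma proj_card2 (F V : Type*) [Field F] [Fintype F] [AddCommGroup V] [Module F V]
    [FiniteDimensional F V] (h2 : finrank F V = 2) :
    Nat.card (ℙ F V) = Fintype.card F + 1 := by
  have h := proj_card_mul F V
  rw [h2] at h
  have hq : 2 ≤ Fintype.card F := Fintype.one_lt_card
  set q := Fintype.card F with hqq
  set d := q - 1 with hd
  have hq1 : q = d + 1 := by omega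
  have he : q ^ 2 - 1 = (d + 2) * d := by
    refine Nat.sub_eq_of_eq_add ?_
    rw [hq1]; ring
  rw [he] at h
  have hcard : Nat.card (ℙ F V) = d + 2 :=
    Nat.eq_of_mul_eq_mul_right (by omega) h
  omega

private lemma proj_card3 (F V : Type*) [Field F] [Fintype F] [AddCommGroup V] [Module F V]
    [FiniteDimensional F V] (h3 : finrank F V = 3) :
    Nat.card (ℙ F V) = Fintype.card F ^ 2 + Fintype.card F + 1 := by
  have h := proj_card_mul F V
  rw [h3] at h
  have hq : 2 ≤ Fintype.card F := Fintype.one_lt_card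
  set q := Fintype.card F with hqq
  set d := q - 1 with hd
  have hq1 : q = d + 1 := by omega
  have he : q ^ 3 - 1 = (d ^ 2 + 3 * d + 3) * d := by
    refine Nat.sub_eq_of_eq_add ?_
    rw [hq1]; ring
  rw [he] at h
  have hcard : Nat.card (ℙ F V) = d ^ 2 + 3 * d + 3 :=
    Nat.eq_of_mul_eq_mul_right (by omega) h
  rw [hcard, hq1]; ring

section Arc
variable {F V : Type*} [Field F] [Fintype F] [AddCommGroup V] [Module F V]


private lemma proj_finite {F W : Type*} [Field F] [AddCommGroup W] [Module F W] [Finite W] :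
    Finite (ℙ F W) := by
  refine Finite.of_surjective (fun w : {w : W // w ≠ 0} => Projectivization.mk F w.1 w.2) ?_
  intro p
  exact ⟨⟨p.rep, p.rep_nonzero⟩, p.mk_rep⟩

variable [FiniteDimensional F V] {n : ℕ}

private lemma arc_bound (h3 : finrank F V = 3) (hn : 4 ≤ n) (v : Fin n → V)
    (hv : ∀ i j k : Fin n, i ≠ j → i ≠ k → j ≠ k → v k ∉ span F ({v i, v j} : Set V)) :
    n ≤ Fintype.card F + 2 ∧ (Odd (Fintype.card F) → n ≤ Fintype.card F + 1) := by
  classical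
  have hfinV : Finite V := Module.finite_of_finite F
  have hfinQ : ∀ i0 : Fin n, Finite (V ⧸ span F ({v i0} : Set V)) := fun i0 =>
    Finite.of_surjective _ (Submodule.mkQ_surjective (span F ({v i0} : Set V)))
  have hfinP : ∀ i0 : Fin n, Finite (ℙ F (V ⧸ span F ({v i0} : Set V))) := fun i0 =>
    haveI := hfinQ i0
    proj_finite
  -- pairwise independence
  have hpair : ∀ i j : Fin n, i ≠ j → v j ∉ span F ({v i} : Set V) := by
    intro i j hij hmem
    obtain ⟨k, hk⟩ : (({i, j} : Finset (Fin n))ᶜ).Nonempty := by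
      rw [← Finset.card_pos, Finset.card_compl]
      have h1 : ({i, j} : Finset (Fin n)).card ≤ 2 :=
        (Finset.card_insert_le _ _).trans (by simp)
      have h2 : Fintype.card (Fin n) = n := Fintype.card_fin n
      omega
    simp only [Finset.mem_compl, Finset.mem_insert, Finset.mem_singleton, not_or] at hk
    exact hv i k j (fun h => hk.1 h.symm) hij hk.2 (span_mono (by simp) hmem)
  have hne : ∀ i : Fin n, v i ≠ 0 := by
    intro i h0
    obtain ⟨j, hj⟩ : (({i} : Finset (Fin n))ᶜ).Nonempty := by
      rw [← Finset.card_pos, Finset.card_compl]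
      have h2 : Fintype.card (Fin n) = n := Fintype.card_fin n
      simp only [Finset.card_singleton]
      omega
    simp only [Finset.mem_compl, Finset.mem_singleton] at hj
    exact hpair j i hj (h0 ▸ Submodule.zero_mem _)
  -- nonvanishing in quotient
  have hmkQ : ∀ i0 j : Fin n, j ≠ i0 → (span F ({v i0} : Set V)).mkQ (v j) ≠ 0 := by
    intro i0 j hj h0
    rw [Submodule.mkQ_apply, Submodule.Quotient.mk_eq_zero] at h0
    exact hpair i0 j (fun h => hj h.symm) h0
  -- the key injective map into the projectivization of the quotient
  have key : ∀ i0 : Fin n, Function.Injective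
      (fun j : {j : Fin n // j ≠ i0} =>
        Projectivization.mk F ((span F ({v i0} : Set V)).mkQ (v j.1)) (hmkQ i0 j.1 j.2)) := by
    intro i0 j j' heq
    by_contra hjj
    have hjj' : (j : Fin n) ≠ (j' : Fin n) := fun h => hjj (Subtype.ext h)
    rw [Projectivization.mk_eq_mk_iff'] at heq
    obtain ⟨a, ha⟩ := heq
    rw [← map_smul, ← sub_eq_zero, ← map_sub, Submodule.mkQ_apply,
      Submodule.Quotient.mk_eq_zero, mem_span_singleton] at ha
    obtain ⟨b, hb⟩ := ha
    have : v j.1 ∈ span F ({v i0, v j'.1} : Set V) := by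
      rw [mem_span_pair]
      exact ⟨-b, a, by rw [neg_smul, hb]; abel⟩
    exact hv i0 j'.1 j.1 (fun h => j'.2 h.symm) (fun h => j.2 h.symm) (Ne.symm hjj') this
  -- cardinal of the quotient projectivization
  have hquot : ∀ i0 : Fin n, Nat.card (ℙ F (V ⧸ span F ({v i0} : Set V)))
      = Fintype.card F + 1 := by
    intro i0
    refine proj_card2 F _ ?_
    have h1 := Submodule.finrank_quotient_add_finrank (span F ({v i0} : Set V))
    rw [h3, finrank_span_singleton (hne i0)] at h1
    omega
  have hsub : ∀ i0 : Fin n, Nat.card {j : Fin n // j ≠ i0} = n - 1 := by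
    intro i0
    rw [Nat.card_eq_fintype_card]
    have h3' := Fintype.card_subtype_compl (α := Fin n) (fun j => j = i0)
    rw [Fintype.card_subtype_eq, Fintype.card_fin] at h3'
    exact h3'
  -- part 1
  have part1 : n ≤ Fintype.card F + 2 := by
    set i0 : Fin n := ⟨0, by omega⟩
    haveI := hfinP i0
    have hle := Nat.card_le_card_of_injective _ (key i0)
    rw [hsub i0, hquot i0] at hle
    omega
  refine ⟨part1, fun hodd => ?_⟩
  by_contra hcon
  have hn2 : n = Fintype.card F + 2 := by omega
  have hq2 : 2 ≤ Fintype.card F := Fintype.one_lt_card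
  -- an external point
  obtain ⟨p, hp⟩ : ∃ p : ℙ F V, ∀ i : Fin n, Projectivization.mk F (v i) (hne i) ≠ p := by
    by_contra hsurj
    push_neg at hsurj
    have hsurj' : Function.Surjective (fun i : Fin n => Projectivization.mk F (v i) (hne i)) := by
      intro p; obtain ⟨i, hi⟩ := hsurj p; exact ⟨i, hi⟩
    haveI : Finite (ℙ F V) := proj_finite
    have hle := Nat.card_le_card_of_surjective _ hsurj'
    rw [proj_card3 F V h3, Nat.card_eq_fintype_card (α := Fin n), Fintype.card_fin] at hle
    nlinarith
  set u : V := p.rep with hu_def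
  have hu0 : u ≠ 0 := p.rep_nonzero
  have hu : ∀ i : Fin n, u ∉ span F ({v i} : Set V) := by
    intro i hmem
    rw [mem_span_singleton] at hmem
    obtain ⟨a, ha⟩ := hmem
    have ha0 : a ≠ 0 := by rintro rfl; rw [zero_smul] at ha; exact hu0 ha.symm
    refine hp i ?_
    rw [← Projectivization.mk_rep p, Projectivization.mk_eq_mk_iff']
    exact ⟨a⁻¹, by rw [show p.rep = u from rfl, ← ha, smul_smul, inv_mul_cancel₀ ha0, one_smul]⟩
  -- claim A : every line through v i and u contains another point of the arc
  have claimA : ∀ i : Fin n, ∃ j : Fin n, j ≠ i ∧ v j ∈ span F ({v i, u} : Set V) := by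
    intro i
    haveI := hfinP i
    have hbij : Function.Bijective
        (fun j : {j : Fin n // j ≠ i} =>
          Projectivization.mk F ((span F ({v i} : Set V)).mkQ (v j.1)) (hmkQ i j.1 j.2)) := by
      rw [Nat.bijective_iff_injective_and_card]
      exact ⟨key i, by rw [hsub i, hquot i]; omega⟩
    have humkQ : (span F ({v i} : Set V)).mkQ u ≠ 0 := by
      intro h0
      rw [Submodule.mkQ_apply, Submodule.Quotient.mk_eq_zero] at h0
      exact hu i h0
    obtain ⟨j, hj⟩ := hbij.2 (Projectivization.mk F _ humkQ)
    refine ⟨j.1, j.2, ?_⟩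
    rw [Projectivization.mk_eq_mk_iff'] at hj
    obtain ⟨a, ha⟩ := hj
    rw [← map_smul, ← sub_eq_zero, ← map_sub, Submodule.mkQ_apply,
      Submodule.Quotient.mk_eq_zero, mem_span_singleton] at ha
    obtain ⟨b, hb⟩ := ha
    rw [mem_span_pair]
    exact ⟨-b, a, by rw [neg_smul, hb]; abel⟩
  -- uniqueness
  have claimU : ∀ i j k : Fin n, j ≠ i → k ≠ i → j ≠ k →
      v j ∈ span F ({v i, u} : Set V) → v k ∈ span F ({v i, u} : Set V) → False := by
    intro i j k hji hki hjk hj hk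
    rw [mem_span_pair] at hj
    obtain ⟨a, b, hab⟩ := hj
    have hb0 : b ≠ 0 := by
      rintro rfl
      refine hpair i j (fun h => hji h.symm) (mem_span_singleton.mpr ⟨a, ?_⟩)
      rw [← hab]; module
    have hu_mem : u ∈ span F ({v i, v j} : Set V) := by
      rw [mem_span_pair]
      have h1 : b⁻¹ • (a • v i + b • u) = b⁻¹ • v j := by rw [hab]
      simp only [smul_add, smul_smul] at h1
      rw [inv_mul_cancel₀ hb0, one_smul] at h1
      refine ⟨-(b⁻¹ * a), b⁻¹, ?_⟩
      rw [neg_smul, ← h1]; abel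
    have hsp : span F ({v i, u} : Set V) ≤ span F ({v i, v j} : Set V) := by
      rw [span_le]
      rintro x (rfl | rfl)
      · exact subset_span (by simp)
      · exact hu_mem
    exact hv i j k (fun h => hji h.symm) (fun h => hki h.symm) hjk (hsp hk)
  -- the involution
  have hσex : ∀ i : Fin n, ∃ j : Fin n, j ≠ i ∧ v j ∈ span F ({v i, u} : Set V) := claimA
  set σ : Fin n → Fin n := fun i => (hσex i).choose with hσ_def
  have hσ1 : ∀ i, σ i ≠ i := fun i => (hσex i).choose_spec.1
  have hσ2 : ∀ i, v (σ i) ∈ span F ({v i, u} : Set V) := fun i => (hσex i).choose_spec.2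
  have hσσ : ∀ i, σ (σ i) = i := by
    intro i
    set j := σ i with hj_def
    have hmem := hσ2 i
    rw [mem_span_pair] at hmem
    obtain ⟨a, b, hab⟩ := hmem
    have ha0 : a ≠ 0 := by
      rintro rfl
      have hb0 : b ≠ 0 := by
        rintro rfl
        exact hne j (by rw [← hab]; module)
      have h1 : b • u = v j := by rw [← hab]; module
      exact hu j (mem_span_singleton.mpr
        ⟨b⁻¹, by rw [← h1, smul_smul, inv_mul_cancel₀ hb0, one_smul]⟩)
    have hvi : v i ∈ span F ({v j, u} : Set V) := by
      rw [mem_span_pair]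
      have h1 : a⁻¹ • (a • v i + b • u) = a⁻¹ • v j := by rw [hab]
      simp only [smul_add, smul_smul] at h1
      rw [inv_mul_cancel₀ ha0, one_smul] at h1
      refine ⟨a⁻¹, -(a⁻¹ * b), ?_⟩
      rw [neg_smul, ← h1]; abel
    by_contra hne'
    exact claimU j (σ j) i (hσ1 j) (fun h => hσ1 i h.symm) hne' (hσ2 j) hvi
  -- parity
  have heven : Even n := by
    have hprod : ∏ _x : Fin n, (-1 : ℤ) = 1 := by
      refine Finset.prod_ninvolution σ (fun a => by norm_num) (fun a _ => hσ1 a)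
        (fun a => Finset.mem_univ _) hσσ
    rw [Finset.prod_const, Finset.card_univ, Fintype.card_fin] at hprod
    exact (neg_one_pow_eq_one_iff_even (by norm_num)).mp hprod
  obtain ⟨m, hm⟩ := hodd
  obtain ⟨t, ht⟩ := heven
  omega
end Arc


private lemma mulVec_restrict {F : Type*} [Field F] {n3 n : ℕ}
    (G : Matrix (Fin n3) (Fin n) F) (s : Finset (Fin n)) (hs : s.card = n3)
    (x : Fin n → F) (hx : ∀ m ∉ s, x m = 0) :
    (G.submatrix id (fun l => ((s.orderIsoOfFin hs l : Fin n)))).mulVec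
      (fun l => x (s.orderIsoOfFin hs l)) = G.mulVec x := by
  funext r
  simp only [Matrix.mulVec, Matrix.submatrix_apply, id, dotProduct]
  have h1 : ∑ m : Fin n, G r m * x m = ∑ m ∈ s, G r m * x m := by
    refine (Finset.sum_subset (Finset.subset_univ s) ?_).symm
    intro m _ hm
    rw [hx m hm, mul_zero]
  rw [h1, ← Finset.sum_coe_sort s (fun m => G r m * x m)]
  exact Fintype.sum_equiv (s.orderIsoOfFin hs).toEquiv _ _ (fun l => rfl)

theorem stmt18 {F : Type*} [Field F] [Fintype F] {q n : ℕ} (hF : Fintype.card F = q)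
    (hn : 4 ≤ n) (G : Matrix (Fin (n - 3)) (Fin n) F)
    (hG : ∀ c : Fin (n - 3) → Fin n, Function.Injective c →
      Matrix.det (G.submatrix id c) ≠ 0) :
    n ≤ q + 2 ∧ (Odd q → n ≤ q + 1) := by
  classical
  subst hF
  set K := LinearMap.ker (Matrix.mulVecLin G) with hK
  -- cardinality of triple complements
  have hcard : ∀ i j k : Fin n, i ≠ j → i ≠ k → j ≠ k →
      ((({i, j, k} : Finset (Fin n))ᶜ).card = n - 3) := by
    intro i j k hij hik hjk
    have h1 : ({i, j, k} : Finset (Fin n)).card = 3 := by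
      rw [Finset.card_insert_of_notMem (by simp [hij, hik]),
        Finset.card_insert_of_notMem (by simp [hjk]), Finset.card_singleton]
    rw [Finset.card_compl, h1, Fintype.card_fin]
  -- key vanishing lemma
  have key0 : ∀ i j k : Fin n, i ≠ j → i ≠ k → j ≠ k → ∀ x : Fin n → F,
      G.mulVec x = 0 → x i = 0 → x j = 0 → x k = 0 → x = 0 := by
    intro i j k hij hik hjk x hx hi hj hk
    set s := (({i, j, k} : Finset (Fin n))ᶜ) with hs_def
    have hs : s.card = n - 3 := hcard i j k hij hik hjk
    set e := s.orderIsoOfFin hs with he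
    set c : Fin (n - 3) → Fin n := fun l => (e l : Fin n) with hc
    have hcinj : Function.Injective c := fun a b hab =>
      e.injective (Subtype.coe_injective hab)
    have hdet := hG c hcinj
    have hvan : ∀ m ∉ s, x m = 0 := by
      intro m hm
      simp only [hs_def, Finset.notMem_compl, Finset.mem_insert, Finset.mem_singleton] at hm
      rcases hm with rfl | rfl | rfl <;> assumption
    have h1 : (G.submatrix id c).mulVec (fun l => x (c l)) = 0 := by
      rw [show (fun l => x (c l)) = (fun l => x (s.orderIsoOfFin hs l)) from rfl]
      rw [mulVec_restrict G s hs x hvan]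
      exact hx
    have h2 : (fun l => x (c l)) = 0 := by
      have h3 := congrArg ((G.submatrix id c)⁻¹.mulVec) h1
      rwa [Matrix.mulVec_mulVec, Matrix.nonsing_inv_mul _ (isUnit_iff_ne_zero.mpr hdet),
        Matrix.one_mulVec, Matrix.mulVec_zero] at h3
    funext m
    by_cases hm : m ∈ s
    · have h4 := congrFun h2 (e.symm ⟨m, hm⟩)
      have h5 : c (e.symm ⟨m, hm⟩) = m := by
        rw [hc]
        simp only [OrderIso.apply_symm_apply]
      rw [h5] at h4
      simpa using h4
    · exact hvan m hm
  -- surjectivity of G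
  have hsurjG : Function.Surjective (Matrix.mulVecLin G) := by
    intro y
    set i : Fin n := ⟨0, by omega⟩
    set j : Fin n := ⟨1, by omega⟩
    set k : Fin n := ⟨2, by omega⟩
    have hij : i ≠ j := by simp [i, j, Fin.ext_iff]
    have hik : i ≠ k := by simp [i, k, Fin.ext_iff]
    have hjk : j ≠ k := by simp [j, k, Fin.ext_iff]
    set s := (({i, j, k} : Finset (Fin n))ᶜ) with hs_def
    have hs : s.card = n - 3 := hcard i j k hij hik hjk
    set e := s.orderIsoOfFin hs with he
    set c : Fin (n - 3) → Fin n := fun l => (e l : Fin n) with hc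
    have hcinj : Function.Injective c := fun a b hab =>
      e.injective (Subtype.coe_injective hab)
    have hdet := hG c hcinj
    set M := G.submatrix id c with hM
    set z := M⁻¹.mulVec y with hz
    set x : Fin n → F := fun m => if h : m ∈ s then z (e.symm ⟨m, h⟩) else 0 with hx_def
    have hvan : ∀ m ∉ s, x m = 0 := fun m hm => dif_neg hm
    have hxc : (fun l => x (c l)) = z := by
      funext l
      have hcl : c l ∈ s := (e l).2
      have : x (c l) = z (e.symm ⟨c l, hcl⟩) := dif_pos hcl
      rw [this]
      congr 1
      rw [show (⟨c l, hcl⟩ : {m // m ∈ s}) = e l from Subtype.ext rfl, OrderIso.symm_apply_apply]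
    refine ⟨x, ?_⟩
    rw [Matrix.mulVecLin_apply, ← mulVec_restrict G s hs x hvan]
    rw [show (fun l => x ((s.orderIsoOfFin hs) l : Fin n)) = z from hxc]
    rw [hz, Matrix.mulVec_mulVec, Matrix.mul_nonsing_inv _ (isUnit_iff_ne_zero.mpr hdet),
      Matrix.one_mulVec]
  -- finrank of the kernel
  have hKrank : finrank F K = 3 := by
    have h1 := LinearMap.finrank_range_add_finrank_ker (Matrix.mulVecLin G)
    rw [LinearMap.range_eq_top.mpr hsurjG, finrank_top] at h1
    rw [Module.finrank_fintype_fun_eq_card, Module.finrank_fintype_fun_eq_card,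
      Fintype.card_fin, Fintype.card_fin] at h1
    rw [← hK] at h1
    omega
  -- the dual functionals
  set φ : Fin n → Module.Dual F K :=
    fun i => (LinearMap.proj i).comp K.subtype with hφ
  have hψ : ∀ i j k : Fin n, i ≠ j → i ≠ k → j ≠ k →
      Function.Surjective (LinearMap.pi (fun t : Fin 3 => φ (![i, j, k] t)) :
        K →ₗ[F] (Fin 3 → F)) := by
    intro i j k hij hik hjk
    set ψ : K →ₗ[F] (Fin 3 → F) := LinearMap.pi (fun t : Fin 3 => φ (![i, j, k] t)) with hψdef
    have hinj : Function.Injective ψ := by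
      rw [← LinearMap.ker_eq_bot]
      rw [Submodule.eq_bot_iff]
      intro x hx
      rw [LinearMap.mem_ker] at hx
      have h0 : x.1 = 0 := by
        refine key0 i j k hij hik hjk x.1 ?_ ?_ ?_ ?_
        · have h := LinearMap.mem_ker.mp x.2
          rwa [Matrix.mulVecLin_apply] at h
        · simpa [hψdef, hφ] using congrFun hx 0
        · simpa [hψdef, hφ] using congrFun hx 1
        · simpa [hψdef, hφ] using congrFun hx 2
      exact Subtype.ext h0
    refine (LinearMap.injective_iff_surjective_of_finrank_eq_finrank ?_).mp hinj
    rw [hKrank, Module.finrank_fintype_fun_eq_card, Fintype.card_fin]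
  -- the arc condition
  have hv : ∀ i j k : Fin n, i ≠ j → i ≠ k → j ≠ k →
      φ k ∉ span F ({φ i, φ j} : Set (Module.Dual F K)) := by
    intro i j k hij hik hjk hmem
    rw [mem_span_pair] at hmem
    obtain ⟨a, b, hab⟩ := hmem
    obtain ⟨x, hx⟩ := hψ i j k hij hik hjk ![0, 0, 1]
    have hxi : φ i x = 0 := by simpa using congrFun hx 0
    have hxj : φ j x = 0 := by simpa using congrFun hx 1
    have hxk : φ k x = 1 := by simpa using congrFun hx 2
    have := congrArg (fun f : Module.Dual F K => f x) hab
    simp only [LinearMap.add_apply, LinearMap.smul_apply, smul_eq_mul, hxi, hxj, hxk] at this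
    simp at this
  -- apply the arc bound
  have hdual3 : finrank F (Module.Dual F K) = 3 := by
    rw [Subspace.dual_finrank_eq, hKrank]
  exact arc_bound hdual3 hn φ hv
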